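/- arXiv:1907.09371 — 9 statements merged into one kernel-verified Lean document; each statement's English description precedes it below -/
import Mathlib

section
/- Let n be a natural number and let p and q be real polynomials of degree at most n. If there exist 2n+1 pairwise distinct real numbers x_0, x_1, ..., x_{2n} such that |p(x_i)| = |q(x_i)| for all 0 ≤ i ≤ 2n, then q = p or q = -p. -/
/-- Let `n` be a natural number and let `p` and `q` be real polynomials of
degree at most `n`. If there exist `2n+1` pairwise distinct real numbers `x₀, …, x_{2n}` such
that `|p(xᵢ)| = |q(xᵢ)|` for all `i`, then `q = p` or `q = -p`. -/
theorem phaseless_real_identification (n : ℕ) (p q : Polynomial ℝ)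
    (hp : p.natDegree ≤ n) (hq : q.natDegree ≤ n)
    (x : Fin (2 * n + 1) → ℝ) (hx : Function.Injective x)
    (h : ∀ i, |p.eval (x i)| = |q.eval (x i)|) :
    q = p ∨ q = -p := by
  classical
  set A : Finset (Fin (2 * n + 1)) :=
    Finset.univ.filter (fun i => (q - p).eval (x i) = 0) with hA
  have hkey : ∀ i ∈ Aᶜ, (q + p).eval (x i) = 0 := by
    intro i hi
    have h1 : (q - p).eval (x i) ≠ 0 := by
      simpa [hA] using Finset.mem_compl.mp hi
    have := h i
    rcases abs_eq_abs.mp this with h2 | h2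
    · exact absurd (by simp [h2]) h1
    · simp [h2]
  have hcases : n + 1 ≤ A.card ∨ n + 1 ≤ Aᶜ.card := by
    by_contra hc
    push_neg at hc
    have h2 := Finset.card_add_card_compl A
    rw [Fintype.card_fin] at h2
    omega
  rcases hcases with hcard | hcard
  · left
    have : q - p = 0 := by
      apply Polynomial.eq_zero_of_natDegree_lt_card_of_eval_eq_zero' _ (A.image x)
      · intro y hy
        obtain ⟨i, hi, rfl⟩ := Finset.mem_image.mp hy
        simpa [hA] using Finset.mem_filter.mp hi |>.2
      · calc (q - p).natDegree ≤ n := le_trans (Polynomial.natDegree_sub_le q p) (by omega)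
          _ < A.card := hcard
          _ = (A.image x).card := (Finset.card_image_of_injective _ hx).symm
    linear_combination (norm := ring_nf) this
  · right
    have : q + p = 0 := by
      apply Polynomial.eq_zero_of_natDegree_lt_card_of_eval_eq_zero' _ (Aᶜ.image x)
      · intro y hy
        obtain ⟨i, hi, rfl⟩ := Finset.mem_image.mp hy
        exact hkey i hi
      · calc (q + p).natDegree ≤ n := le_trans (Polynomial.natDegree_add_le q p) (by omega)
          _ < Aᶜ.card := hcard
          _ = (Aᶜ.image x).card := (Finset.card_image_of_injective _ hx).symm
    linear_combination (norm := ring_nf) this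
end

section
/- Let n be a natural number, let x_0, x_1, ..., x_n be pairwise distinct real numbers, and let p be a real polynomial of degree at most n. Then the set S of all real numbers x for which there exist real polynomials q and r of degree at most n with q ≠ r, |q(x_i)| = |p(x_i)| and |r(x_i)| = |p(x_i)| for all 0 ≤ i ≤ n, and q(x) = r(x), is finite. -/
/-- Let `x₀, …, xₙ` be pairwise distinct real numbers and let `p` be a real
polynomial of degree at most `n`. Then the set `S` of all real numbers `t` for which there
exist real polynomials `q ≠ r` of degree at most `n` matching `|p|` at all the `xᵢ` and with
`q(t) = r(t)` is finite. -/
theorem exceptional_set_finite (n : ℕ) (x : Fin (n + 1) → ℝ) (hx : Function.Injective x)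
    (p : Polynomial ℝ) (hp : p.natDegree ≤ n) :
    {t : ℝ | ∃ q r : Polynomial ℝ, q.natDegree ≤ n ∧ r.natDegree ≤ n ∧ q ≠ r ∧
      (∀ i, |q.eval (x i)| = |p.eval (x i)|) ∧
      (∀ i, |r.eval (x i)| = |p.eval (x i)|) ∧
      q.eval t = r.eval t}.Finite := by
  classical
  set Q : Set (Polynomial ℝ) :=
    {q | q.natDegree ≤ n ∧ ∀ i, |q.eval (x i)| = |p.eval (x i)|} with hQ
  -- Q is finite
  have hQfin : Q.Finite := by
    have hinj : Set.InjOn (fun q : Polynomial ℝ => fun i : Fin (n + 1) => q.eval (x i)) Q := by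
      intro q hq r hr h
      have hsub : q - r = 0 := by
        apply Polynomial.eq_zero_of_natDegree_lt_card_of_eval_eq_zero (q - r) hx
        · intro i
          simp only [Polynomial.eval_sub]
          have := congrFun h i
          simp only at this
          linarith [congrFun h i]
        · calc (q - r).natDegree ≤ max q.natDegree r.natDegree := Polynomial.natDegree_sub_le q r
            _ ≤ n := max_le hq.1 hr.1
            _ < Fintype.card (Fin (n + 1)) := by simp
      exact sub_eq_zero.mp hsub
    have himg : ((fun q : Polynomial ℝ => fun i : Fin (n + 1) => q.eval (x i)) '' Q).Finite := by
      apply Set.Finite.subset (Set.Finite.pi (fun i : Fin (n + 1) =>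
        (Set.finite_singleton (p.eval (x i))).insert (-(p.eval (x i)))))
      rintro _ ⟨q, hq, rfl⟩
      intro i _
      have := hq.2 i
      rcases abs_eq_abs.mp this with h | h
      · exact Or.inr (by simpa using h)
      · exact Or.inl h
    exact Set.Finite.of_finite_image himg hinj
  -- S is contained in a finite union
  have hT : ∀ q ∈ Q, ∀ r ∈ Q, ({t : ℝ | q ≠ r ∧ q.eval t = r.eval t}).Finite := by
    intro q _ r _
    by_cases h : q = r
    · simp [h]
    · apply Set.Finite.subset (Polynomial.finite_setOf_isRoot (p := q - r) (sub_ne_zero.mpr h))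
      intro t ht
      simp only [Set.mem_setOf_eq, Polynomial.IsRoot, Polynomial.eval_sub]
      linarith [ht.2]
  apply Set.Finite.subset (Set.Finite.biUnion hQfin (fun q hq =>
    Set.Finite.biUnion hQfin (fun r hr => hT q hq r hr)))
  rintro t ⟨q, r, hq, hr, hne, hq2, hr2, heq⟩
  exact Set.mem_biUnion ⟨hq, hq2⟩ (Set.mem_biUnion ⟨hr, hr2⟩ ⟨hne, heq⟩)
end

section
/- Let n be a natural number, let x_0, x_1, ..., x_n be pairwise distinct real numbers, and let p be a real polynomial of degree at most n. Then there exists a real number x* such that every real polynomial q of degree at most n satisfying |q(x_i)| = |p(x_i)| for all 0 ≤ i ≤ n and q(x*) = p(x*) is equal to p. -/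
/-- Let `x₀, …, xₙ` be pairwise distinct real numbers and let `p` be a real
polynomial of degree at most `n`. Then there exists a real number `x⋆` such that every real
polynomial `q` of degree at most `n` satisfying `|q(xᵢ)| = |p(xᵢ)|` for all `i` and
`q(x⋆) = p(x⋆)` is equal to `p`. -/
theorem adaptive_exact_evaluation_identifies (n : ℕ) (x : Fin (n + 1) → ℝ)
    (hx : Function.Injective x) (p : Polynomial ℝ) (hp : p.natDegree ≤ n) :
    ∃ xstar : ℝ, ∀ q : Polynomial ℝ, q.natDegree ≤ n →
      (∀ i, |q.eval (x i)| = |p.eval (x i)|) →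
      q.eval xstar = p.eval xstar → q = p := by
  set c : (Fin (n + 1) → Bool) → Polynomial ℝ := fun ε =>
    Lagrange.interpolate Finset.univ x fun i => (if ε i then 1 else -1) * p.eval (x i) with hc
  obtain ⟨xstar, hxstar⟩ := Infinite.exists_notMem_finset
    ((Finset.univ : Finset (Fin (n + 1) → Bool)).biUnion fun ε => (c ε - p).roots.toFinset)
  refine ⟨xstar, fun q hq habs heval => ?_⟩
  have hxs : Set.InjOn x (Finset.univ : Finset (Fin (n + 1))) := hx.injOn
  have hcard : ((Finset.univ : Finset (Fin (n + 1))).card : WithBot ℕ) = (n + 1 : ℕ) := by simp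
  have hdeg : ∀ r : Polynomial ℝ, r.natDegree ≤ n →
      r.degree < ((Finset.univ : Finset (Fin (n + 1))).card : WithBot ℕ) := by
    intro r hr
    refine lt_of_le_of_lt r.degree_le_natDegree ?_
    rw [hcard]
    exact_mod_cast Nat.lt_succ_of_le hr
  -- q equals one of the candidates
  set ε : Fin (n + 1) → Bool := fun i => decide (q.eval (x i) = p.eval (x i)) with hε
  have hqc : q = c ε := by
    apply Lagrange.eq_interpolate_of_eval_eq _ hxs (hdeg q hq)
    intro i _
    by_cases h : q.eval (x i) = p.eval (x i)
    · simp [hε, h]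
    · have := (abs_eq_abs.mp (habs i)).resolve_left h
      simp only [hε, this, decide_eq_true_eq]
      split <;> linarith
  -- the candidate equals p
  have hcε : c ε = p := by
    by_contra hne
    have hroot : Polynomial.eval xstar (c ε - p) = 0 := by
      rw [Polynomial.eval_sub, ← hqc, heval, sub_self]
    have : xstar ∈ (c ε - p).roots.toFinset := by
      rw [Multiset.mem_toFinset, Polynomial.mem_roots (sub_ne_zero_of_ne hne)]
      exact hroot
    exact hxstar (Finset.mem_biUnion.mpr ⟨ε, Finset.mem_univ _, this⟩)
  rw [hqc, hcε]
end

section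
/- Let A be a subfield of the field ℝ of real numbers and let t ∈ ℝ be transcendental over A. Let n be a natural number, let x_0, x_1, ..., x_n be pairwise distinct elements of A, and let p and q be polynomials of degree at most n with coefficients in A. If |q(x_i)| = |p(x_i)| for all 0 ≤ i ≤ n (values taken in ℝ via the inclusion of A) and q(t) = p(t) (evaluation in ℝ), then q = p. -/
/-- Let `A` be a subfield of `ℝ` and let `t ∈ ℝ` be transcendental over `A`.
Let `x₀, …, xₙ` be pairwise distinct elements of `A` and let `p`, `q` be polynomials of degree
at most `n` with coefficients in `A`. If `|q(xᵢ)| = |p(xᵢ)|` for all `i` (values taken in `ℝ`)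
and `q(t) = p(t)`, then `q = p`. -/
theorem subfield_nonadaptive_identification (A : Subfield ℝ) (t : ℝ)
    (ht : Transcendental A t) (n : ℕ) (x : Fin (n + 1) → A) (hx : Function.Injective x)
    (p q : Polynomial A) (hp : p.natDegree ≤ n) (hq : q.natDegree ≤ n)
    (habs : ∀ i, |Polynomial.aeval ((x i : ℝ)) q| = |Polynomial.aeval ((x i : ℝ)) p|)
    (hexact : Polynomial.aeval t q = Polynomial.aeval t p) :
    q = p := by
  by_contra hne
  exact ht ⟨q - p, sub_ne_zero.mpr hne, by rw [map_sub, hexact, sub_self]⟩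
end

section
/- Let n be a natural number, let x_0, x_1, ..., x_n be pairwise distinct complex numbers, let f be a complex polynomial of degree at most n with f(x_i) ≠ 0 for all 0 ≤ i ≤ n, and let x'_0, x'_1, ..., x'_{n-1} be arbitrary complex numbers. Then there exist complex polynomials p and q of degree at most n with p ≠ q such that |p(x_i)| = |f(x_i)| and |q(x_i)| = |f(x_i)| for all 0 ≤ i ≤ n, and p(x'_j) = q(x'_j) for all 0 ≤ j ≤ n-1. -/
open Polynomial

/-- Any complex number of modulus at most 2 is a difference of two unit complex numbers. -/
lemma unit_pair (d : ℂ) (hd : ‖d‖ ≤ 2) :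
    ∃ u v : ℂ, ‖u‖ = 1 ∧ ‖v‖ = 1 ∧ u - v = d := by
  rcases eq_or_ne d 0 with rfl | h0
  · exact ⟨1, 1, by simp, by simp, by ring⟩
  · set r : ℝ := ‖d‖ with hr
    have hrpos : 0 < r := norm_pos_iff.mpr h0
    have hr2 : (r / 2) ^ 2 ≤ 1 := by nlinarith
    set t : ℝ := Real.sqrt (1 - (r / 2) ^ 2) with ht
    have ht2 : t ^ 2 = 1 - (r / 2) ^ 2 := Real.sq_sqrt (by linarith)
    set e : ℂ := d / (r : ℂ) with he
    have habse : ‖e‖ = 1 := by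
      rw [he, norm_div, Complex.norm_real, Real.norm_eq_abs, ← hr, abs_of_pos hrpos, div_self hrpos.ne']
    have hkey : ‖((r / 2 : ℝ) : ℂ) + (t : ℂ) * Complex.I‖ = 1 := by
      rw [Complex.norm_add_mul_I, show (r / 2) ^ 2 + t ^ 2 = 1 by rw [ht2]; ring]
      exact Real.sqrt_one
    have hkey' : ‖((-(r / 2) : ℝ) : ℂ) + (t : ℂ) * Complex.I‖ = 1 := by
      rw [Complex.norm_add_mul_I, show (-(r / 2)) ^ 2 + t ^ 2 = 1 by rw [ht2]; ring]
      exact Real.sqrt_one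
    refine ⟨e * (((r / 2 : ℝ) : ℂ) + (t : ℂ) * Complex.I),
            e * (((-(r / 2) : ℝ) : ℂ) + (t : ℂ) * Complex.I), ?_, ?_, ?_⟩
    · rw [norm_mul, habse, hkey, one_mul]
    · rw [norm_mul, habse, hkey', one_mul]
    · have hrc : (r : ℂ) ≠ 0 := by exact_mod_cast hrpos.ne'
      have : e * (r : ℂ) = d := by rw [he, div_mul_cancel₀ _ hrc]
      calc e * (((r / 2 : ℝ) : ℂ) + (t : ℂ) * Complex.I)
            - e * (((-(r / 2) : ℝ) : ℂ) + (t : ℂ) * Complex.I)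
          = e * (r : ℂ) := by push_cast; ring
        _ = d := this

lemma natDeg_le_of_deg_lt {p : Polynomial ℂ} {n : ℕ} (h : p.degree < ((n + 1 : ℕ) : WithBot ℕ)) :
    p.natDegree ≤ n := by
  rcases eq_or_ne p 0 with rfl | h0
  · simp
  · exact Nat.lt_succ_iff.mp ((Polynomial.natDegree_lt_iff_degree_lt h0).mpr (by exact_mod_cast h))

/-- Let `x₀, …, xₙ` be pairwise distinct complex numbers, let `f` be a
complex polynomial of degree at most `n` with `f(xᵢ) ≠ 0` for all `i`, and let
`x'₀, …, x'_{n-1}` be arbitrary complex numbers. Then there exist complex polynomials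
`p ≠ q` of degree at most `n` such that `|p(xᵢ)| = |f(xᵢ)| = |q(xᵢ)|` for all `i`, and
`p(x'ⱼ) = q(x'ⱼ)` for all `j`. -/
theorem complex_no_go (n : ℕ) (x : Fin (n + 1) → ℂ) (hx : Function.Injective x)
    (f : Polynomial ℂ) (hf : f.natDegree ≤ n) (hf0 : ∀ i, f.eval (x i) ≠ 0)
    (x' : Fin n → ℂ) :
    ∃ p q : Polynomial ℂ, p.natDegree ≤ n ∧ q.natDegree ≤ n ∧ p ≠ q ∧
      (∀ i, ‖p.eval (x i)‖ = ‖f.eval (x i)‖) ∧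
      (∀ i, ‖q.eval (x i)‖ = ‖f.eval (x i)‖) ∧
      (∀ j, p.eval (x' j) = q.eval (x' j)) := by
  classical
  set g : Polynomial ℂ := ∏ j : Fin n, (X - C (x' j)) with hg
  have hgmonic : g.Monic := monic_prod_of_monic _ _ fun j _ => monic_X_sub_C _
  have hgne : g ≠ 0 := hgmonic.ne_zero
  have hgdeg : g.natDegree = n := by
    rw [hg, Polynomial.natDegree_prod _ _ fun j _ => X_sub_C_ne_zero (x' j)]
    simp
  have hgdeg' : g.degree = (n : WithBot ℕ) := by
    rw [Polynomial.degree_eq_natDegree hgne, hgdeg]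
  have hgx' : ∀ j, g.eval (x' j) = 0 := by
    intro j
    rw [hg, eval_prod]
    exact Finset.prod_eq_zero (Finset.mem_univ j) (by simp)
  set a : Fin (n + 1) → ℂ := fun i => g.eval (x i) / f.eval (x i) with ha
  have hne : (Finset.univ : Finset (Fin (n + 1))).Nonempty := Finset.univ_nonempty
  set M : ℝ := Finset.univ.sup' hne fun i => ‖a i‖ with hM
  have hM0 : 0 ≤ M :=
    le_trans (norm_nonneg (a 0))
      (Finset.le_sup' (fun i => ‖a i‖) (Finset.mem_univ (0 : Fin (n + 1))))
  set c : ℂ := ((1 / (1 + M) : ℝ) : ℂ) with hc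
  have hcne : c ≠ 0 := by
    rw [hc]
    simp only [ne_eq, Complex.ofReal_eq_zero]
    positivity
  have hd : ∀ i, ‖c * a i‖ ≤ 2 := by
    intro i
    rw [norm_mul, hc, Complex.norm_real, Real.norm_eq_abs, abs_of_pos (by positivity)]
    have h1 : ‖a i‖ ≤ M :=
      Finset.le_sup' (fun i => ‖a i‖) (Finset.mem_univ i)
    have h2 : (0 : ℝ) < 1 + M := by linarith
    rw [div_mul_eq_mul_div, one_mul, div_le_iff₀ h2]
    linarith
  choose u v hu hv huv using fun i => unit_pair (c * a i) (hd i)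
  have hinj : Set.InjOn x (Finset.univ : Finset (Fin (n + 1))) := hx.injOn
  set P : Polynomial ℂ := Lagrange.interpolate Finset.univ x (fun i => f.eval (x i) * u i)
    with hP
  set Q : Polynomial ℂ := Lagrange.interpolate Finset.univ x (fun i => f.eval (x i) * v i)
    with hQ
  have hcard : ((Finset.univ : Finset (Fin (n + 1))).card : WithBot ℕ) = ((n + 1 : ℕ) : WithBot ℕ) := by
    simp
  have hPdeg : P.degree < ((n + 1 : ℕ) : WithBot ℕ) := by
    have := Lagrange.degree_interpolate_lt (r := fun i => f.eval (x i) * u i) hinj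
    rwa [hcard] at this
  have hQdeg : Q.degree < ((n + 1 : ℕ) : WithBot ℕ) := by
    have := Lagrange.degree_interpolate_lt (r := fun i => f.eval (x i) * v i) hinj
    rwa [hcard] at this
  have hPev : ∀ i, P.eval (x i) = f.eval (x i) * u i := fun i =>
    Lagrange.eval_interpolate_at_node _ hinj (Finset.mem_univ i)
  have hQev : ∀ i, Q.eval (x i) = f.eval (x i) * v i := fun i =>
    Lagrange.eval_interpolate_at_node _ hinj (Finset.mem_univ i)
  have hcg_deg : (C c * g).degree < ((n + 1 : ℕ) : WithBot ℕ) := by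
    have h1 : (C c * g).degree ≤ g.degree := by
      calc (C c * g).degree ≤ (C c).degree + g.degree := degree_mul_le _ _
        _ ≤ 0 + g.degree := add_le_add degree_C_le le_rfl
        _ = g.degree := zero_add _
    refine h1.trans_lt ?_
    rw [hgdeg']
    exact_mod_cast Nat.lt_succ_self n
  have hPQ : P - Q = C c * g := by
    refine Polynomial.eq_of_degrees_lt_of_eval_index_eq _ hinj ?_ ?_ ?_
    · rw [hcard]
      exact lt_of_le_of_lt (degree_sub_le P Q) (max_lt hPdeg hQdeg)
    · rw [hcard]; exact hcg_deg
    · intro i _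
      rw [eval_sub, hPev, hQev, ← mul_sub, huv, eval_mul, eval_C, ha]
      have := hf0 i
      field_simp
  have hPQne : P ≠ Q := by
    intro h
    apply mul_ne_zero (C_ne_zero.mpr hcne) hgne
    rw [← hPQ, h, sub_self]
  refine ⟨P, Q, natDeg_le_of_deg_lt hPdeg, natDeg_le_of_deg_lt hQdeg, hPQne, ?_, ?_, ?_⟩
  · intro i; rw [hPev, norm_mul, hu, mul_one]
  · intro i; rw [hQev, norm_mul, hv, mul_one]
  · intro j
    have h0 : P.eval (x' j) - Q.eval (x' j) = 0 := by
      rw [← eval_sub, hPQ, eval_mul, hgx' j, mul_zero]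
    exact sub_eq_zero.mp h0
end

section
/- Let n ≥ 1, let x_0, x_1, ..., x_{2n} be pairwise distinct nonnegative real numbers, and let θ_0, θ_1, ..., θ_{2n} be pairwise distinct angles in [0, 2π). Let p and q be complex polynomials of degree at most n. If |p(x_i · e^{iθ_k})| = |q(x_i · e^{iθ_k})| for all 0 ≤ i ≤ 2n and all 0 ≤ k ≤ 2n, then there exists a complex number u with |u| = 1 such that q = u·p. -/
open Polynomial

private lemma coeff_comp_C_mul_X (p : ℂ[X]) (e : ℂ) (d : ℕ) :
    (p.comp (C e * X)).coeff d = p.coeff d * e ^ d := by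
  rw [comp_eq_sum_left, Polynomial.sum_def, finset_sum_coeff]
  have h : ∀ i ∈ p.support, (C (p.coeff i) * (C e * X) ^ i).coeff d
      = if d = i then p.coeff i * e ^ i else 0 := by
    intro i _
    rw [mul_pow, ← C_pow, ← mul_assoc, ← C_mul, coeff_C_mul_X_pow]
  rw [Finset.sum_congr rfl h, Finset.sum_ite_eq p.support d]
  split_ifs with h2
  · rfl
  · simp [Polynomial.notMem_support_iff.mp h2]

private lemma conj_poly_eval (p : ℂ[X]) (z : ℂ) :
    (p.map (starRingEnd ℂ)).eval ((starRingEnd ℂ) z) = (starRingEnd ℂ) (p.eval z) := by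
  rw [eval_map, Polynomial.eval₂_at_apply]

/-- Let `n ≥ 1`, let `x₀, …, x_{2n}` be pairwise distinct nonnegative real
numbers, and let `θ₀, …, θ_{2n}` be pairwise distinct angles in `[0, 2π)`. Let `p` and `q` be
complex polynomials of degree at most `n`. If `|p(xᵢ·e^{iθₖ})| = |q(xᵢ·e^{iθₖ})|` for all
`i, k`, then `q = u·p` for some `u` with `|u| = 1`. -/
theorem phaseless_complex_grid_identification (n : ℕ) (hn : 1 ≤ n)
    (x : Fin (2 * n + 1) → ℝ) (hx0 : ∀ i, 0 ≤ x i) (hx : Function.Injective x)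
    (θ : Fin (2 * n + 1) → ℝ) (hθ : Function.Injective θ)
    (hθr : ∀ k, θ k ∈ Set.Ico 0 (2 * Real.pi))
    (p q : Polynomial ℂ) (hp : p.natDegree ≤ n) (hq : q.natDegree ≤ n)
    (h : ∀ i k,
      ‖p.eval ((x i : ℂ) * Complex.exp ((θ k : ℂ) * Complex.I))‖ =
      ‖q.eval ((x i : ℂ) * Complex.exp ((θ k : ℂ) * Complex.I))‖) :
    ∃ u : ℂ, ‖u‖ = 1 ∧ q = Polynomial.C u * p := by
  classical
  set K := starRingEnd ℂ with hK
  set e : Fin (2 * n + 1) → ℂ := fun k => Complex.exp ((θ k : ℂ) * Complex.I) with he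
  have habs : ∀ k, e k * K (e k) = 1 := by
    intro k
    rw [Complex.mul_conj]
    norm_cast
    rw [Complex.normSq_eq_norm_sq]
    have : ‖e k‖ = 1 := by
      simp [he, Complex.norm_exp]
    rw [this]; norm_num
  have he0 : ∀ k, e k ≠ 0 := fun k => Complex.exp_ne_zero _
  have heinj : Function.Injective e := by
    intro k k' hkk
    apply hθ
    rw [he] at hkk
    simp only [Complex.exp_eq_exp_iff_exists_int] at hkk
    obtain ⟨m, hm⟩ := hkk
    have : θ k = θ k' + (m : ℝ) * (2 * Real.pi) := by
      have him := congrArg Complex.im hm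
      simpa using him
    have h1 := hθr k; have h2 := hθr k'
    obtain ⟨hk1, hk2⟩ := h1; obtain ⟨hk1', hk2'⟩ := h2
    have hpi : (0:ℝ) < 2 * Real.pi := by positivity
    have hm0 : m = 0 := by
      by_contra hm0
      rcases lt_or_gt_of_ne hm0 with hlt | hgt
      · have hm1 : m ≤ -1 := by omega
        have : (m : ℝ) ≤ -1 := by exact_mod_cast hm1
        nlinarith [this, hk1, hk2', hpi]
      · have : (1:ℝ) ≤ (m : ℝ) := by exact_mod_cast hgt
        nlinarith [this, hk2, hk1', hpi]
    rw [hm0] at this; simpa using this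
  -- key coefficient identity
  have key : ∀ j l, p.coeff j * K (p.coeff l) = q.coeff j * K (q.coeff l) := by
    intro j l
    -- Step 1: for each k, the radial polynomials agree
    have step1 : ∀ k, p.comp (C (e k) * X) * (p.map K).comp (C (K (e k)) * X)
        = q.comp (C (e k) * X) * (q.map K).comp (C (K (e k)) * X) := by
      intro k
      set P := p.comp (C (e k) * X) * (p.map K).comp (C (K (e k)) * X) with hP
      set Q := q.comp (C (e k) * X) * (q.map K).comp (C (K (e k)) * X) with hQ
      have hdeg : ∀ (r : ℂ[X]), r.natDegree ≤ n →
          (r.comp (C (e k) * X) * (r.map K).comp (C (K (e k)) * X)).natDegree ≤ 2 * n := by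
        intro r hr
        refine natDegree_mul_le.trans ?_
        have d1 : (r.comp (C (e k) * X)).natDegree ≤ n := by
          rw [natDegree_comp]
          calc r.natDegree * (C (e k) * X).natDegree ≤ r.natDegree * 1 :=
            Nat.mul_le_mul_left _ (natDegree_C_mul_le _ _ |>.trans (by simp))
          _ ≤ n := by simpa using hr
        have d2 : ((r.map K).comp (C (K (e k)) * X)).natDegree ≤ n := by
          rw [natDegree_comp]
          calc (r.map K).natDegree * (C (K (e k)) * X).natDegree
              ≤ (r.map K).natDegree * 1 :=
            Nat.mul_le_mul_left _ (natDegree_C_mul_le _ _ |>.trans (by simp))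
          _ ≤ n := by simpa using (Polynomial.natDegree_map_le (f := K) (p := r)).trans hr
        omega
      have heval : ∀ i : Fin (2 * n + 1), (P - Q).eval ((x i : ℂ)) = 0 := by
        intro i
        have hval : ∀ (r : ℂ[X]),
            (r.comp (C (e k) * X) * (r.map K).comp (C (K (e k)) * X)).eval ((x i : ℂ))
            = r.eval ((x i : ℂ) * e k) * K (r.eval ((x i : ℂ) * e k)) := by
          intro r
          rw [eval_mul, eval_comp, eval_comp]
          simp only [eval_mul, eval_C, eval_X]
          rw [mul_comm (e k) _, mul_comm (K (e k)) _]
          congr 1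
          have : K ((x i : ℂ) * e k) = (x i : ℂ) * K (e k) := by
            rw [map_mul, hK, Complex.conj_ofReal]
          rw [← this, conj_poly_eval]
        rw [eval_sub, hP, hQ, hval p, hval q]
        have habs' := h i k
        have h1 : ‖p.eval ((x i : ℂ) * e k)‖ ^ 2
            = ‖q.eval ((x i : ℂ) * e k)‖ ^ 2 := by rw [habs']
        rw [← Complex.normSq_eq_norm_sq, ← Complex.normSq_eq_norm_sq] at h1
        have h2 : (Complex.normSq (p.eval ((x i : ℂ) * e k)) : ℂ)
            = (Complex.normSq (q.eval ((x i : ℂ) * e k)) : ℂ) := by exact_mod_cast h1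
        rw [← Complex.mul_conj, ← Complex.mul_conj] at h2
        rw [sub_eq_zero]
        exact h2
      have hzero : P - Q = 0 := by
        apply eq_zero_of_natDegree_lt_card_of_eval_eq_zero (P - Q)
          (Complex.ofReal_injective.comp hx) heval
        have : (P - Q).natDegree ≤ 2 * n :=
          (natDegree_sub_le _ _).trans (max_le (hdeg p hp) (hdeg q hq))
        simpa using Nat.lt_succ_of_le this
      exact sub_eq_zero.mp hzero
    -- Step 2: coefficient identity for each k and each total degree d
    have step2 : ∀ (k : Fin (2 * n + 1)) (d : ℕ), ∑ jl ∈ Finset.HasAntidiagonal.antidiagonal d,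
        (p.coeff jl.1 * K (p.coeff jl.2) - q.coeff jl.1 * K (q.coeff jl.2))
          * (e k) ^ jl.1 * (K (e k)) ^ jl.2 = 0 := by
      intro k d
      have h1 := congrArg (fun r : ℂ[X] => r.coeff d) (step1 k)
      simp only [coeff_mul] at h1
      have hc : ∀ (r : ℂ[X]) (jl : ℕ × ℕ),
          (r.comp (C (e k) * X)).coeff jl.1 * ((r.map K).comp (C (K (e k)) * X)).coeff jl.2
          = r.coeff jl.1 * K (r.coeff jl.2) * (e k) ^ jl.1 * (K (e k)) ^ jl.2 := by
        intro r jl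
        rw [coeff_comp_C_mul_X, coeff_comp_C_mul_X, coeff_map]
        ring
      calc ∑ jl ∈ Finset.HasAntidiagonal.antidiagonal d,
          (p.coeff jl.1 * K (p.coeff jl.2) - q.coeff jl.1 * K (q.coeff jl.2))
            * (e k) ^ jl.1 * (K (e k)) ^ jl.2
          = ∑ jl ∈ Finset.HasAntidiagonal.antidiagonal d,
            ((p.comp (C (e k) * X)).coeff jl.1 * ((p.map K).comp (C (K (e k)) * X)).coeff jl.2
            - (q.comp (C (e k) * X)).coeff jl.1 * ((q.map K).comp (C (K (e k)) * X)).coeff jl.2)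
            := Finset.sum_congr rfl (fun jl _ => by rw [hc p, hc q]; ring)
        _ = 0 := by rw [Finset.sum_sub_distrib, h1, sub_self]
    -- Step 3: angular reduction
    set S : ℂ[X] := ∑ jl ∈ Finset.HasAntidiagonal.antidiagonal (j + l),
      C (p.coeff jl.1 * K (p.coeff jl.2) - q.coeff jl.1 * K (q.coeff jl.2)) * X ^ (2 * jl.1)
      with hS
    have hSdeg : S.natDegree ≤ 2 * n := by
      apply natDegree_sum_le_of_forall_le
      intro jl hjl
      by_cases hjn : jl.1 ≤ n
      · refine (natDegree_C_mul_le _ _).trans ?_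
        rw [natDegree_X_pow]
        omega
      · have hp0 : p.coeff jl.1 = 0 := coeff_eq_zero_of_natDegree_lt (by omega)
        have hq0 : q.coeff jl.1 = 0 := coeff_eq_zero_of_natDegree_lt (by omega)
        simp [hp0, hq0]
    have hSeval : ∀ k, S.eval (e k) = 0 := by
      intro k
      have h2 := step2 k (j + l)
      have heq : S.eval (e k) = (e k) ^ (j + l) * ∑ jl ∈ Finset.HasAntidiagonal.antidiagonal (j + l),
          (p.coeff jl.1 * K (p.coeff jl.2) - q.coeff jl.1 * K (q.coeff jl.2))
            * (e k) ^ jl.1 * (K (e k)) ^ jl.2 := by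
        rw [hS, eval_finset_sum, Finset.mul_sum]
        refine Finset.sum_congr rfl fun jl hjl => ?_
        have hjl' : jl.1 + jl.2 = j + l := Finset.HasAntidiagonal.mem_antidiagonal.mp hjl
        rw [eval_mul, eval_C, eval_pow, eval_X]
        set c := p.coeff jl.1 * K (p.coeff jl.2) - q.coeff jl.1 * K (q.coeff jl.2) with hcdef
        have h3 : (e k) ^ jl.2 * (K (e k)) ^ jl.2 = 1 := by
          rw [← mul_pow, habs, one_pow]
        rw [← hjl', two_mul, pow_add, pow_add]
        linear_combination (-(c * (e k) ^ jl.1 * (e k) ^ jl.1)) * h3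
      rw [heq, h2, mul_zero]
    have hS0 : S = 0 := by
      apply eq_zero_of_natDegree_lt_card_of_eval_eq_zero S heinj hSeval
      simpa using Nat.lt_succ_of_le hSdeg
    have h5 : S.coeff (2 * j)
        = p.coeff j * K (p.coeff l) - q.coeff j * K (q.coeff l) := by
      rw [hS, finset_sum_coeff]
      rw [Finset.sum_eq_single ((j, l) : ℕ × ℕ)]
      · rw [coeff_C_mul_X_pow, if_pos rfl]
      · intro jl hjl hne
        have hmem := Finset.HasAntidiagonal.mem_antidiagonal.mp hjl
        rw [coeff_C_mul_X_pow, if_neg]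
        intro hcont
        exact hne (Prod.ext (by omega) (by omega))
      · intro hmem
        exact absurd (Finset.HasAntidiagonal.mem_antidiagonal.mpr (rfl : (j, l).1 + (j, l).2 = j + l)) hmem
    rw [hS0, coeff_zero] at h5
    exact sub_eq_zero.mp h5.symm
  -- Endgame
  by_cases hp0 : p = 0
  · refine ⟨1, by simp, ?_⟩
    have hq0 : q = 0 := by
      ext m
      have hm := (key m m).symm
      rw [hp0] at hm
      simp only [coeff_zero, zero_mul] at hm
      rw [hK, Complex.mul_conj] at hm
      have : Complex.normSq (q.coeff m) = 0 := by exact_mod_cast hm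
      simpa using Complex.normSq_eq_zero.mp this
    rw [hp0, hq0]
    simp
  · obtain ⟨j0, hj0⟩ : ∃ j0, p.coeff j0 ≠ 0 :=
      ⟨p.natDegree, mt leadingCoeff_eq_zero.mp hp0⟩
    have hb0 : q.coeff j0 ≠ 0 := by
      intro hb
      have hm := key j0 j0
      rw [hb, map_zero, mul_zero, hK, Complex.mul_conj] at hm
      have : Complex.normSq (p.coeff j0) = 0 := by exact_mod_cast hm
      exact hj0 (Complex.normSq_eq_zero.mp this)
    refine ⟨q.coeff j0 / p.coeff j0, ?_, ?_⟩
    · rw [norm_div]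
      have habs2 : ‖p.coeff j0‖ = ‖q.coeff j0‖ := by
        have hm := key j0 j0
        rw [hK, Complex.mul_conj, Complex.mul_conj] at hm
        have hns : Complex.normSq (p.coeff j0) = Complex.normSq (q.coeff j0) := by
          exact_mod_cast hm
        rw [Complex.normSq_eq_norm_sq, Complex.normSq_eq_norm_sq] at hns
        nlinarith [norm_nonneg (p.coeff j0), norm_nonneg (q.coeff j0)]
      rw [← habs2, div_self (norm_ne_zero_iff.mpr hj0)]
    · ext m
      rw [coeff_C_mul]
      have hKa : K (p.coeff j0) ≠ 0 := by
        simpa [hK] using hj0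
      have h1 : K (p.coeff j0) * p.coeff m = K (q.coeff j0) * q.coeff m := by
        have hc := congrArg K (key j0 m)
        simpa [hK, map_mul, mul_comm] using hc
      have hmain : q.coeff j0 * p.coeff m = q.coeff m * p.coeff j0 := by
        apply mul_left_cancel₀ hKa
        calc K (p.coeff j0) * (q.coeff j0 * p.coeff m)
            = q.coeff j0 * (K (p.coeff j0) * p.coeff m) := by ring
          _ = q.coeff j0 * (K (q.coeff j0) * q.coeff m) := by rw [h1]
          _ = (q.coeff j0 * K (q.coeff j0)) * q.coeff m := by ring
          _ = (p.coeff j0 * K (p.coeff j0)) * q.coeff m := by rw [← key j0 j0]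
          _ = K (p.coeff j0) * (q.coeff m * p.coeff j0) := by ring
      rw [div_mul_eq_mul_div, eq_div_iff hj0]
      linear_combination -hmain
end

section
/- Let p and q be complex polynomials such that |p(z)| = |q(z)| for every complex number z. Then there exists a complex number u with |u| = 1 such that q = u·p. -/
open Polynomial

private lemma phase_aux : ∀ n : ℕ, ∀ p q : Polynomial ℂ, p.natDegree = n →
    (∀ z : ℂ, ‖p.eval z‖ = ‖q.eval z‖) →
    ∃ u : ℂ, ‖u‖ = 1 ∧ q = Polynomial.C u * p := by
  intro n
  induction n with
  | zero =>
    intro p q hdeg h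
    by_cases hp : p = 0
    · refine ⟨1, by simp, ?_⟩
      subst hp
      have hq : q = 0 := by
        apply Polynomial.funext
        intro z
        have := h z
        simp only [eval_zero, norm_zero] at this
        simpa using norm_eq_zero.1 this.symm
      simp [hq]
    · -- p is a nonzero constant
      obtain ⟨c, hpc⟩ : ∃ c, p = C c := ⟨_, Polynomial.eq_C_of_natDegree_eq_zero hdeg⟩
      subst hpc
      have hc0 : c ≠ 0 := fun h0 => hp (by rw [h0, map_zero])
      have hqdeg : q.degree ≤ 0 := by
        by_contra hq
        push_neg at hq
        obtain ⟨z, hz⟩ := Complex.exists_root hq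
        have := h z
        rw [hz, norm_zero, eval_C] at this
        exact hc0 (norm_eq_zero.1 this)
      obtain ⟨d, hqc⟩ : ∃ d, q = C d := ⟨_, Polynomial.eq_C_of_degree_le_zero hqdeg⟩
      subst hqc
      have habs : ‖c‖ = ‖d‖ := by
        have := h 0
        rwa [eval_C, eval_C] at this
      refine ⟨d / c, ?_, ?_⟩
      · rw [norm_div, ← habs, div_self]
        simpa using hc0
      · rw [← map_mul, div_mul_cancel₀ _ hc0]
  | succ m ih =>
    intro p q hdeg h
    have hp : p ≠ 0 := fun h0 => by simp [h0] at hdeg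
    have hpdeg : 0 < p.degree := by
      rw [← Polynomial.natDegree_pos_iff_degree_pos, hdeg]; exact Nat.succ_pos m
    obtain ⟨a, ha⟩ := Complex.exists_root hpdeg
    have hqa : q.eval a = 0 := by
      have := h a
      rw [ha, norm_zero] at this
      exact norm_eq_zero.1 this.symm
    obtain ⟨p₁, hp₁⟩ := (Polynomial.dvd_iff_isRoot.2 ha : (X - C a) ∣ p)
    obtain ⟨q₁, hq₁⟩ := (Polynomial.dvd_iff_isRoot.2 hqa : (X - C a) ∣ q)
    have hp₁0 : p₁ ≠ 0 := fun h0 => hp (by simp [hp₁, h0])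
    have hdeg₁ : p₁.natDegree = m := by
      have : p.natDegree = (X - C a).natDegree + p₁.natDegree := by
        rw [hp₁]
        exact Polynomial.natDegree_mul (Polynomial.X_sub_C_ne_zero a) hp₁0
      rw [Polynomial.natDegree_X_sub_C] at this
      omega
    have hne : ∀ z : ℂ, z ≠ a → ‖p₁.eval z‖ = ‖q₁.eval z‖ := by
      intro z hz
      have hzz : ‖z - a‖ ≠ 0 := by
        simp [sub_eq_zero, hz]
      have := h z
      rw [hp₁, hq₁] at this
      simp only [eval_mul, eval_sub, eval_X, eval_C, norm_mul] at this
      exact mul_left_cancel₀ hzz this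
    have hall : ∀ z : ℂ, ‖p₁.eval z‖ = ‖q₁.eval z‖ := by
      have hc1 : Continuous fun z : ℂ => ‖p₁.eval z‖ :=
        continuous_norm.comp p₁.continuous
      have hc2 : Continuous fun z : ℂ => ‖q₁.eval z‖ :=
        continuous_norm.comp q₁.continuous
      have hdense : Dense ({a}ᶜ : Set ℂ) := dense_compl_singleton a
      have := Continuous.ext_on hdense hc1 hc2 (fun z hz => hne z hz)
      exact fun z => congrFun this z
    obtain ⟨u, hu, hqu⟩ := ih p₁ q₁ hdeg₁ hall
    exact ⟨u, hu, by rw [hq₁, hqu, hp₁]; ring⟩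

/-- Let `p` and `q` be complex polynomials such that `|p(z)| = |q(z)|` for
every complex number `z`. Then there exists `u` with `|u| = 1` such that `q = u·p`. -/
theorem equal_modulus_implies_phase_equal (p q : Polynomial ℂ)
    (h : ∀ z : ℂ, ‖p.eval z‖ = ‖q.eval z‖) :
    ∃ u : ℂ, ‖u‖ = 1 ∧ q = Polynomial.C u * p := by
  exact phase_aux p.natDegree p q rfl h
end

section
/- Let n be a natural number and let p be a complex polynomial of degree at most n. Then there exist real polynomials A_0, A_1, ..., A_n and B_1, ..., B_n, each of degree at most 2n, such that for all real numbers x and y: |p(x·e^{iy})|^2 = Σ_{m=0}^{n} A_m(x)·cos(m y) + Σ_{m=1}^{n} B_m(x)·sin(m y). -/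
open Polynomial Complex Finset

private lemma re_mul_exp (w : ℂ) (t θ : ℝ) :
    (w * ((t : ℂ) * Complex.exp ((θ : ℂ) * Complex.I))).re
      = w.re * t * Real.cos θ - w.im * t * Real.sin θ := by
  simp [Complex.mul_re, Complex.mul_im, Complex.exp_ofReal_mul_I_re,
    Complex.exp_ofReal_mul_I_im]
  ring

/-- Let `p` be a complex polynomial of degree at most `n`. Then there exist
real polynomials `A₀, …, Aₙ` and `B₁, …, Bₙ`, each of degree at most `2n`, such that for all
real `x` and `y`:
`|p(x·e^{iy})|² = ∑_{m=0}^{n} Aₘ(x)·cos(my) + ∑_{m=1}^{n} Bₘ(x)·sin(my)`. -/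
theorem squared_modulus_trig_decomposition (n : ℕ) (p : Polynomial ℂ)
    (hp : p.natDegree ≤ n) :
    ∃ A B : ℕ → Polynomial ℝ,
      (∀ m, (A m).natDegree ≤ 2 * n) ∧ (∀ m, (B m).natDegree ≤ 2 * n) ∧
      ∀ x y : ℝ,
        ‖p.eval ((x : ℂ) * Complex.exp ((y : ℂ) * Complex.I))‖ ^ 2 =
          (∑ m ∈ Finset.range (n + 1), (A m).eval x * Real.cos (m * y)) +
          ∑ m ∈ Finset.Icc 1 n, (B m).eval x * Real.sin (m * y) := by
  classical
  set c : ℕ → ℂ := fun j => p.coeff j with hc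
  set d : ℕ → ℕ → ℕ := fun j k => max j k - min j k with hd
  set s : ℕ → ℕ → ℝ := fun j k => if k < j then (-1:ℝ) else 1 with hs
  refine ⟨fun m => ∑ j ∈ Finset.range (n+1), ∑ k ∈ Finset.range (n+1),
      if d j k = m then Polynomial.C (c j * (starRingEnd ℂ) (c k)).re * Polynomial.X ^ (j+k) else 0,
    fun m => ∑ j ∈ Finset.range (n+1), ∑ k ∈ Finset.range (n+1),
      if d j k = m then Polynomial.C (s j k * (c j * (starRingEnd ℂ) (c k)).im) * Polynomial.X ^ (j+k) else 0,
    ?_, ?_, ?_⟩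
  · intro m
    refine Polynomial.natDegree_sum_le_of_forall_le _ _ fun j hj =>
      Polynomial.natDegree_sum_le_of_forall_le _ _ fun k hk => ?_
    split
    · refine (Polynomial.natDegree_C_mul_le _ _).trans ?_
      rw [Polynomial.natDegree_X_pow]
      have := Finset.mem_range.mp hj
      have := Finset.mem_range.mp hk
      omega
    · simp
  · intro m
    refine Polynomial.natDegree_sum_le_of_forall_le _ _ fun j hj =>
      Polynomial.natDegree_sum_le_of_forall_le _ _ fun k hk => ?_
    split
    · refine (Polynomial.natDegree_C_mul_le _ _).trans ?_
      rw [Polynomial.natDegree_X_pow]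
      have := Finset.mem_range.mp hj
      have := Finset.mem_range.mp hk
      omega
    · simp
  · intro x y
    have hp' : p.natDegree < n + 1 := Nat.lt_succ_of_le hp
    set z : ℂ := (x : ℂ) * Complex.exp ((y : ℂ) * Complex.I) with hz
    -- powers of z and conj z
    have hzj : ∀ j : ℕ, z ^ j = ((x ^ j : ℝ) : ℂ) * Complex.exp ((((j : ℝ) * y : ℝ) : ℂ) * Complex.I) := by
      intro j
      rw [hz, mul_pow, ← Complex.exp_nat_mul]
      push_cast
      ring_nf
    have hczj : ∀ j : ℕ, (starRingEnd ℂ) (z ^ j)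
        = ((x ^ j : ℝ) : ℂ) * Complex.exp (((-((j : ℝ) * y) : ℝ) : ℂ) * Complex.I) := by
      intro j
      rw [hzj j, map_mul, Complex.conj_ofReal, ← Complex.exp_conj]
      congr 2
      rw [map_mul, Complex.conj_ofReal, Complex.conj_I]
      push_cast
      ring
    -- the LHS as a double sum
    have hLHS : ‖p.eval z‖ ^ 2
        = ∑ j ∈ Finset.range (n+1), ∑ k ∈ Finset.range (n+1),
            ((c j * (starRingEnd ℂ) (c k)).re * (x ^ (j+k)) * Real.cos (((j:ℝ) - k) * y)
              - (c j * (starRingEnd ℂ) (c k)).im * (x ^ (j+k)) * Real.sin (((j:ℝ) - k) * y)) := by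
      have h1 : ‖p.eval z‖ ^ 2 = ((p.eval z) * (starRingEnd ℂ) (p.eval z)).re := by
        rw [Complex.mul_conj]
        simp [Complex.sq_norm]
      rw [h1, Polynomial.eval_eq_sum_range' hp', map_sum, Finset.sum_mul_sum, Complex.re_sum]
      refine Finset.sum_congr rfl fun j hj => ?_
      rw [Complex.re_sum]
      refine Finset.sum_congr rfl fun k hk => ?_
      have hterm : (c j * z ^ j) * (starRingEnd ℂ) (c k * z ^ k)
          = (c j * (starRingEnd ℂ) (c k)) * (((x ^ (j+k) : ℝ) : ℂ)
              * Complex.exp (((((j:ℝ) - k) * y : ℝ) : ℂ) * Complex.I)) := by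
        rw [map_mul, hzj j, hczj k]
        have hE : Complex.exp ((((j : ℝ) * y : ℝ) : ℂ) * Complex.I)
            * Complex.exp (((-((k : ℝ) * y) : ℝ) : ℂ) * Complex.I)
            = Complex.exp (((((j:ℝ) - k) * y : ℝ) : ℂ) * Complex.I) := by
          rw [← Complex.exp_add]
          congr 1
          push_cast
          ring
        rw [← hE]
        push_cast
        ring
      rw [hterm, re_mul_exp]
    rw [hLHS]
    -- the cosine part
    have hA : (∑ m ∈ Finset.range (n + 1),
          (Polynomial.eval x (∑ j ∈ Finset.range (n+1), ∑ k ∈ Finset.range (n+1),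
            if d j k = m then Polynomial.C (c j * (starRingEnd ℂ) (c k)).re * Polynomial.X ^ (j+k) else 0))
            * Real.cos (m * y))
        = ∑ j ∈ Finset.range (n+1), ∑ k ∈ Finset.range (n+1),
            (c j * (starRingEnd ℂ) (c k)).re * x ^ (j+k) * Real.cos ((d j k : ℝ) * y) := by
      simp only [Polynomial.eval_finset_sum, Finset.sum_mul, apply_ite (Polynomial.eval x),
        Polynomial.eval_mul, Polynomial.eval_pow, Polynomial.eval_C, Polynomial.eval_X,
        Polynomial.eval_zero, ite_mul, zero_mul]
      rw [Finset.sum_comm]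
      refine Finset.sum_congr rfl fun j hj => ?_
      rw [Finset.sum_comm]
      refine Finset.sum_congr rfl fun k hk => ?_
      rw [Finset.sum_ite_eq (Finset.range (n+1)) (d j k)
        (fun m => (c j * (starRingEnd ℂ) (c k)).re * x ^ (j+k) * Real.cos ((m : ℝ) * y)), if_pos]
      have hjn := Finset.mem_range.mp hj
      have hkn := Finset.mem_range.mp hk
      simp only [hd, Finset.mem_range]
      omega
    -- the sine part
    have hB : (∑ m ∈ Finset.Icc 1 n,
          (Polynomial.eval x (∑ j ∈ Finset.range (n+1), ∑ k ∈ Finset.range (n+1),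
            if d j k = m then Polynomial.C (s j k * (c j * (starRingEnd ℂ) (c k)).im) * Polynomial.X ^ (j+k) else 0))
            * Real.sin (m * y))
        = ∑ j ∈ Finset.range (n+1), ∑ k ∈ Finset.range (n+1),
            (if d j k ∈ Finset.Icc 1 n then
              (s j k * (c j * (starRingEnd ℂ) (c k)).im) * x ^ (j+k)
                * Real.sin ((d j k : ℝ) * y) else 0) := by
      simp only [Polynomial.eval_finset_sum, Finset.sum_mul, apply_ite (Polynomial.eval x),
        Polynomial.eval_mul, Polynomial.eval_pow, Polynomial.eval_C, Polynomial.eval_X,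
        Polynomial.eval_zero, ite_mul, zero_mul]
      rw [Finset.sum_comm]
      refine Finset.sum_congr rfl fun j hj => ?_
      rw [Finset.sum_comm]
      refine Finset.sum_congr rfl fun k hk => ?_
      rw [Finset.sum_ite_eq (Finset.Icc 1 n) (d j k)
        (fun m => (s j k * (c j * (starRingEnd ℂ) (c k)).im) * x ^ (j+k) * Real.sin ((m : ℝ) * y))]
    rw [hA, hB, ← Finset.sum_add_distrib]
    refine Finset.sum_congr rfl fun j hj => ?_
    rw [← Finset.sum_add_distrib]
    refine Finset.sum_congr rfl fun k hk => ?_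
    have hjn := Finset.mem_range.mp hj
    have hkn := Finset.mem_range.mp hk
    rcases lt_trichotomy j k with h | h | h
    · -- j < k
      have hdjk : d j k = k - j := by simp only [hd]; omega
      have hcast : ((j : ℝ) - k) * y = -(((d j k : ℝ)) * y) := by
        rw [hdjk]
        have : ((k - j : ℕ) : ℝ) = (k : ℝ) - j := by
          push_cast [Nat.cast_sub h.le]; ring
        rw [this]; ring
      have hsjk : s j k = 1 := by simp only [hs]; rw [if_neg (by omega)]
      rw [if_pos, hsjk, hcast, Real.cos_neg, Real.sin_neg]
      · ring
      · simp only [Finset.mem_Icc]; omega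
    · -- j = k
      subst h
      have hdjj : d j j = 0 := by simp [hd]
      have him : (c j * (starRingEnd ℂ) (c j)).im = 0 := by
        simp [Complex.mul_conj]
      rw [if_neg, hdjj, him]
      · norm_num
      · rw [hdjj]; simp
    · -- k < j
      have hdjk : d j k = j - k := by simp only [hd]; omega
      have hcast : ((j : ℝ) - k) * y = ((d j k : ℝ)) * y := by
        rw [hdjk]
        have : ((j - k : ℕ) : ℝ) = (j : ℝ) - k := by
          push_cast [Nat.cast_sub h.le]; ring
        rw [this]
      have hsjk : s j k = -1 := by simp only [hs]; rw [if_pos h]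
      rw [if_pos, hsjk, hcast]
      · ring
      · simp only [Finset.mem_Icc]; omega
end

section
/- Let n be a natural number and let w be a complex polynomial of degree at most n such that w(0) = 1 and |w(ω)| = 1 for every complex number ω with ω^{n+1} = 1. Then w is the constant polynomial 1. -/
open Polynomial Finset Complex

private lemma geom_root_sum (n : ℕ) (x : ℂ) (hx : x ^ (n + 1) = 1) :
    ∑ j ∈ Finset.range (n + 1), x ^ j = if x = 1 then (n + 1 : ℂ) else 0 := by
  split_ifs with h
  · simp [h]
  · rw [geom_sum_eq h, hx]
    simp

private lemma conj_root (n : ℕ) (η : ℂ) (hη : η ^ (n + 1) = 1) :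
    (starRingEnd ℂ) η = η ^ n := by
  have hne : η ≠ 0 := by
    intro h
    rw [h, zero_pow (Nat.succ_ne_zero n)] at hη
    exact zero_ne_one hη
  have habs : ‖η‖ = 1 := by
    have hp : ‖η‖ ^ (n + 1) = 1 := by
      rw [← norm_pow, hη, norm_one]
    rcases pow_eq_one_iff_cases.mp hp with h' | h' | ⟨h', _⟩
    · exact absurd h' (Nat.succ_ne_zero n)
    · exact h'
    · have := norm_nonneg η; linarith
  have h1 : η * (starRingEnd ℂ) η = 1 := by
    rw [Complex.mul_conj, Complex.normSq_eq_norm_sq, habs]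
    norm_num
  have h2 : η * η ^ n = 1 := by rw [← pow_succ', hη]
  exact mul_left_cancel₀ hne (h1.trans h2.symm)

/-- Let `w` be a complex polynomial of degree at most `n` such that
`w(0) = 1` and `|w(ω)| = 1` for every complex number `ω` with `ω^{n+1} = 1`. Then `w` is the
constant polynomial `1`. -/
theorem roots_of_unity_rigidity (n : ℕ) (w : Polynomial ℂ) (hw : w.natDegree ≤ n)
    (h0 : w.eval 0 = 1) (h1 : ∀ ω : ℂ, ω ^ (n + 1) = 1 → ‖w.eval ω‖ = 1) :
    w = 1 := by
  obtain ⟨ζ, hζ⟩ : ∃ ζ : ℂ, IsPrimitiveRoot ζ (n + 1) :=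
    ⟨_, Complex.isPrimitiveRoot_exp (n + 1) (Nat.succ_ne_zero n)⟩
  have hζ1 : ζ ^ (n + 1) = 1 := hζ.pow_eq_one
  have hdeg : w.natDegree < n + 1 := Nat.lt_succ_of_le hw
  set S : ℂ := ∑ j ∈ Finset.range (n + 1), w.eval (ζ ^ j) * (starRingEnd ℂ) (w.eval (ζ ^ j))
    with hS
  have hroot : ∀ j : ℕ, (ζ ^ j) ^ (n + 1) = 1 := by
    intro j; rw [← pow_mul, mul_comm, pow_mul, hζ1, one_pow]
  have hS1 : S = (n + 1 : ℂ) := by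
    have hterm : ∀ j ∈ Finset.range (n + 1),
        w.eval (ζ ^ j) * (starRingEnd ℂ) (w.eval (ζ ^ j)) = 1 := by
      intro j _
      rw [Complex.mul_conj, Complex.normSq_eq_norm_sq, h1 _ (hroot j)]
      norm_num
    rw [hS, Finset.sum_congr rfl hterm, Finset.sum_const, Finset.card_range]
    simp
  have hS2 : S = (n + 1 : ℂ) * ∑ k ∈ Finset.range (n + 1),
      w.coeff k * (starRingEnd ℂ) (w.coeff k) := by
    have expand : ∀ j : ℕ,
        w.eval (ζ ^ j) * (starRingEnd ℂ) (w.eval (ζ ^ j)) =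
        ∑ k ∈ Finset.range (n + 1), ∑ l ∈ Finset.range (n + 1),
          w.coeff k * (starRingEnd ℂ) (w.coeff l) * (ζ ^ (k + n * l)) ^ j := by
      intro j
      rw [Polynomial.eval_eq_sum_range' hdeg]
      rw [map_sum, Finset.sum_mul_sum]
      refine Finset.sum_congr rfl fun k _ => Finset.sum_congr rfl fun l _ => ?_
      rw [map_mul, map_pow, conj_root n (ζ ^ j) (hroot j)]
      have hpow : (ζ ^ j) ^ k * (((ζ ^ j) ^ n) ^ l) = (ζ ^ (k + n * l)) ^ j := by
        rw [← pow_mul, ← pow_mul, ← pow_mul, ← pow_add, ← pow_mul]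
        congr 1
        ring
      linear_combination (w.coeff k * (starRingEnd ℂ) (w.coeff l)) * hpow
    have inner : ∀ k ∈ Finset.range (n + 1), ∀ l ∈ Finset.range (n + 1),
        ∑ j ∈ Finset.range (n + 1), (ζ ^ (k + n * l)) ^ j =
        if k = l then (n + 1 : ℂ) else 0 := by
      intro k hk l hl
      rw [geom_root_sum n _ (hroot _)]
      simp only [Finset.mem_range] at hk hl
      congr 1
      simp only [eq_iff_iff, hζ.pow_eq_one_iff_dvd]
      constructor
      · intro hd
        have h2 : (n + 1 : ℤ) ∣ (k : ℤ) + n * l := by exact_mod_cast hd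
        have h3 : (n + 1 : ℤ) ∣ (k : ℤ) - l := by
          obtain ⟨c, hc⟩ := h2
          exact ⟨c - l, by linarith [hc]⟩
        have h4 : (k : ℤ) - l = 0 := by
          apply Int.eq_zero_of_abs_lt_dvd h3
          rw [abs_lt]
          constructor <;> push_cast <;> omega
        omega
      · rintro rfl
        exact ⟨k, by ring⟩
    calc S = ∑ j ∈ Finset.range (n + 1), ∑ k ∈ Finset.range (n + 1),
            ∑ l ∈ Finset.range (n + 1),
              w.coeff k * (starRingEnd ℂ) (w.coeff l) * (ζ ^ (k + n * l)) ^ j := by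
          rw [hS]; exact Finset.sum_congr rfl fun j _ => expand j
      _ = ∑ k ∈ Finset.range (n + 1), ∑ l ∈ Finset.range (n + 1),
            ∑ j ∈ Finset.range (n + 1),
              w.coeff k * (starRingEnd ℂ) (w.coeff l) * (ζ ^ (k + n * l)) ^ j := by
          rw [Finset.sum_comm]
          exact Finset.sum_congr rfl fun k _ => Finset.sum_comm
      _ = ∑ k ∈ Finset.range (n + 1), ∑ l ∈ Finset.range (n + 1),
            w.coeff k * (starRingEnd ℂ) (w.coeff l) *
              (if k = l then (n + 1 : ℂ) else 0) := by
          refine Finset.sum_congr rfl fun k hk => Finset.sum_congr rfl fun l hl => ?_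
          rw [← Finset.mul_sum, inner k hk l hl]
      _ = ∑ k ∈ Finset.range (n + 1),
            w.coeff k * (starRingEnd ℂ) (w.coeff k) * (n + 1 : ℂ) := by
          refine Finset.sum_congr rfl fun k hk => ?_
          rw [Finset.sum_eq_single k]
          · simp
          · intro l _ hne; simp [Ne.symm hne]
          · intro h; exact absurd hk h
      _ = (n + 1 : ℂ) * ∑ k ∈ Finset.range (n + 1),
            w.coeff k * (starRingEnd ℂ) (w.coeff k) := by
          rw [Finset.mul_sum]; exact Finset.sum_congr rfl fun k _ => by ring
  have hn1 : (n + 1 : ℂ) ≠ 0 := by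
    have : ((n + 1 : ℕ) : ℂ) ≠ 0 := Nat.cast_ne_zero.mpr (Nat.succ_ne_zero n)
    push_cast at this
    exact this
  have hsum : ∑ k ∈ Finset.range (n + 1), w.coeff k * (starRingEnd ℂ) (w.coeff k) = 1 := by
    apply mul_left_cancel₀ hn1
    rw [← hS2, hS1, mul_one]
  have hsumR : ∑ k ∈ Finset.range (n + 1), Complex.normSq (w.coeff k) = 1 := by
    have := congrArg Complex.re hsum
    simpa [Complex.mul_conj] using this
  have hc0 : w.coeff 0 = 1 := by rw [Polynomial.coeff_zero_eq_eval_zero, h0]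
  have hrest : ∀ k ∈ Finset.range (n + 1), k ≠ 0 → w.coeff k = 0 := by
    have hsplit : Complex.normSq (w.coeff 0) +
        ∑ k ∈ (Finset.range (n + 1)).erase 0, Complex.normSq (w.coeff k) = 1 :=
      (Finset.add_sum_erase (Finset.range (n + 1)) (fun k => Complex.normSq (w.coeff k))
        (Finset.mem_range.mpr (Nat.succ_pos n))).trans hsumR
    rw [hc0] at hsplit
    simp only [Complex.normSq_one] at hsplit
    have hz : ∑ k ∈ (Finset.range (n + 1)).erase 0, Complex.normSq (w.coeff k) = 0 := by
      linarith
    intro k hk hk0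
    have := (Finset.sum_eq_zero_iff_of_nonneg
      (fun i _ => Complex.normSq_nonneg _)).mp hz k (Finset.mem_erase.mpr ⟨hk0, hk⟩)
    exact Complex.normSq_eq_zero.mp this
  ext m
  rcases Nat.eq_zero_or_pos m with rfl | hm
  · simpa using hc0
  · rw [Polynomial.coeff_one, if_neg (by omega)]
    rcases le_or_gt m n with hle | hlt
    · exact hrest m (Finset.mem_range.mpr (Nat.lt_succ_of_le hle)) (by omega)
    · exact Polynomial.coeff_eq_zero_of_natDegree_lt (lt_of_le_of_lt hw hlt)
end
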